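/- Let G be a tree on vertex set [m] (m ≥ 2), and for each edge e of G let b^{(e)} be an n×n matrix with nonnegative entries. Let p_e ≥ 1 be reals with ∑_{e ∈ E(G)} 1/p_e = 1. Then ∑_{v ∈ [n]^m} ∏_{e ∈ E(G)} b^{(e)}_{v(e)} ≤ ∏_{e ∈ E(G)} (∑_i (∑_j b^{(e)}_{ij})^{p_e})^{1/p_e}, where for an edge e = {a,b} we write b^{(e)}_{v(e)} = b^{(e)}_{v_a v_b}. -/

import Mathlib

open Real

/-- The value `b^{(e)}_{v(e)}` of the symmetric edge matrix `B e` at the pair of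
indices assigned by `v` to the endpoints of the edge `e`. -/
noncomputable def edgeVal {m n : ℕ} (B : Sym2 (Fin m) → Matrix (Fin n) (Fin n) ℝ)
    (hBsym : ∀ e i j, B e i j = B e j i) (v : Fin m → Fin n) (e : Sym2 (Fin m)) : ℝ :=
  Sym2.lift ⟨fun a c => B e (v a) (v c), fun a c => hBsym e (v a) (v c)⟩ e


namespace BLtree

noncomputable def Nrm {n : ℕ} (t : ℝ) (c : Fin n → ℝ) : ℝ :=
  if t = 0 then 1 else (∑ i, c i ^ (1/t)) ^ t

lemma Nrm_nonneg {n : ℕ} {t : ℝ} {c : Fin n → ℝ} (hc : ∀ i, 0 ≤ c i) : 0 ≤ Nrm t c := by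
  unfold Nrm; split
  · norm_num
  · exact Real.rpow_nonneg (Finset.sum_nonneg fun i _ => Real.rpow_nonneg (hc i) _) _

/-- weighted two-factor Hölder -/
lemma holder_w {ι : Type*} [Fintype ι] (w f g : ι → ℝ) (hw : ∀ i, 0 ≤ w i)
    (hf : ∀ i, 0 ≤ f i) (hg : ∀ i, 0 ≤ g i) {α β : ℝ} (hα : 0 < α) (hβ : 0 < β)
    (hαβ : α + β = 1) :
    ∑ i, w i * (f i * g i) ≤
      (∑ i, w i * f i ^ (1/α)) ^ α * (∑ i, w i * g i ^ (1/β)) ^ β := by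
  have hα1 : α < 1 := by linarith
  have hconj : (1/α).HolderConjugate (1/β) := by
    constructor
    · simp only [one_div, inv_inv, inv_one]; exact hαβ
    · positivity
    · positivity
  have key := Real.inner_le_Lp_mul_Lq_of_nonneg (s := Finset.univ)
    (f := fun i => w i ^ α * f i) (g := fun i => w i ^ β * g i) hconj
    (fun i _ => mul_nonneg (Real.rpow_nonneg (hw i) _) (hf i))
    (fun i _ => mul_nonneg (Real.rpow_nonneg (hw i) _) (hg i))
  simp only [one_div_one_div] at key
  have e1 : ∀ i : ι, w i * (f i * g i) = (w i ^ α * f i) * (w i ^ β * g i) := by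
    intro i
    have : w i ^ α * w i ^ β = w i := by
      rw [← Real.rpow_add' (hw i) (by rw [hαβ]; norm_num), hαβ, Real.rpow_one]
    calc w i * (f i * g i) = (w i ^ α * w i ^ β) * (f i * g i) := by rw [this]
    _ = (w i ^ α * f i) * (w i ^ β * g i) := by ring
  have e2 : ∀ i : ι, (w i ^ α * f i) ^ ((1:ℝ)/α) = w i * f i ^ ((1:ℝ)/α) := by
    intro i
    rw [Real.mul_rpow (Real.rpow_nonneg (hw i) _) (hf i), ← Real.rpow_mul (hw i),
      mul_one_div_cancel hα.ne', Real.rpow_one]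
  have e3 : ∀ i : ι, (w i ^ β * g i) ^ ((1:ℝ)/β) = w i * g i ^ ((1:ℝ)/β) := by
    intro i
    rw [Real.mul_rpow (Real.rpow_nonneg (hw i) _) (hg i), ← Real.rpow_mul (hw i),
      mul_one_div_cancel hβ.ne', Real.rpow_one]
  calc ∑ i, w i * (f i * g i) = ∑ i, (w i ^ α * f i) * (w i ^ β * g i) :=
        Finset.sum_congr rfl fun i _ => e1 i
  _ ≤ (∑ i, (w i ^ α * f i) ^ ((1:ℝ)/α)) ^ α * (∑ i, (w i ^ β * g i) ^ ((1:ℝ)/β)) ^ β := key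
  _ = (∑ i, w i * f i ^ (1/α)) ^ α * (∑ i, w i * g i ^ (1/β)) ^ β := by
      rw [Finset.sum_congr rfl fun i _ => e2 i, Finset.sum_congr rfl fun i _ => e3 i]

lemma Nrm_mul_le {n : ℕ} {t1 t2 : ℝ} {c1 c2 : Fin n → ℝ} (ht1 : 0 ≤ t1) (ht2 : 0 < t2)
    (hs : t1 + t2 ≤ 1) (hc1 : ∀ i, 0 ≤ c1 i) (hc2 : ∀ i, 0 ≤ c2 i)
    (hone : t1 = 0 → ∀ i, c1 i = 1) :
    Nrm (t1 + t2) (fun i => c1 i * c2 i) ≤ Nrm t1 c1 * Nrm t2 c2 := by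
  rcases eq_or_lt_of_le ht1 with h0 | ht1p
  · have hc1' : ∀ i, c1 i = 1 := hone h0.symm
    have : (fun i => c1 i * c2 i) = c2 := by funext i; rw [hc1' i, one_mul]
    rw [this, ← h0, zero_add]
    simp [Nrm]
  · have hts : 0 < t1 + t2 := by linarith
    have hα : 0 < t1 / (t1 + t2) := div_pos ht1p hts
    have hβ : 0 < t2 / (t1 + t2) := div_pos ht2 hts
    have hαβ : t1 / (t1 + t2) + t2 / (t1 + t2) = 1 := by field_simp
    have key := holder_w (fun _ : Fin n => (1:ℝ))
      (fun i => c1 i ^ (1/(t1+t2))) (fun i => c2 i ^ (1/(t1+t2)))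
      (fun _ => zero_le_one) (fun i => Real.rpow_nonneg (hc1 i) _)
      (fun i => Real.rpow_nonneg (hc2 i) _) hα hβ hαβ
    simp only [one_mul] at key
    have e1 : ∀ i, (c1 i ^ ((1:ℝ)/(t1+t2))) ^ (1/(t1/(t1+t2))) = c1 i ^ (1/t1) := by
      intro i
      rw [← Real.rpow_mul (hc1 i)]
      congr 1
      field_simp
    have e2 : ∀ i, (c2 i ^ ((1:ℝ)/(t1+t2))) ^ (1/(t2/(t1+t2))) = c2 i ^ (1/t2) := by
      intro i
      rw [← Real.rpow_mul (hc2 i)]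
      congr 1
      field_simp
    have e0 : ∀ i, (c1 i * c2 i) ^ ((1:ℝ)/(t1+t2)) =
        c1 i ^ ((1:ℝ)/(t1+t2)) * c2 i ^ ((1:ℝ)/(t1+t2)) := fun i =>
      Real.mul_rpow (hc1 i) (hc2 i)
    rw [Finset.sum_congr rfl fun i _ => e1 i, Finset.sum_congr rfl fun i _ => e2 i] at key
    have lhs_eq : Nrm (t1 + t2) (fun i => c1 i * c2 i) =
        (∑ i, c1 i ^ ((1:ℝ)/(t1+t2)) * c2 i ^ ((1:ℝ)/(t1+t2))) ^ (t1+t2) := by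
      rw [Nrm, if_neg hts.ne']
      rw [Finset.sum_congr rfl fun i _ => e0 i]
    rw [lhs_eq, Nrm, if_neg ht1p.ne', Nrm, if_neg ht2.ne']
    have hnn : (0:ℝ) ≤ ∑ i, c1 i ^ ((1:ℝ)/(t1+t2)) * c2 i ^ ((1:ℝ)/(t1+t2)) :=
      Finset.sum_nonneg fun i _ =>
        mul_nonneg (Real.rpow_nonneg (hc1 i) _) (Real.rpow_nonneg (hc2 i) _)
    have step := Real.rpow_le_rpow hnn key hts.le
    refine step.trans_eq ?_
    have hA : (0:ℝ) ≤ ∑ i, c1 i ^ (1/t1) :=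
      Finset.sum_nonneg fun i _ => Real.rpow_nonneg (hc1 i) _
    have hB : (0:ℝ) ≤ ∑ i, c2 i ^ (1/t2) :=
      Finset.sum_nonneg fun i _ => Real.rpow_nonneg (hc2 i) _
    rw [Real.mul_rpow (Real.rpow_nonneg hA _) (Real.rpow_nonneg hB _),
      ← Real.rpow_mul hA, ← Real.rpow_mul hB]
    congr 2 <;> field_simp

lemma trilinear {n : ℕ} {t1 t2 q : ℝ} (ht1 : 0 < t1) (ht2 : 0 < t2) (hq : 0 < q)
    (hsum : t1 + t2 + q = 1) (M : Fin n → Fin n → ℝ) (hM : ∀ i j, 0 ≤ M i j)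
    (hMs : ∀ i j, M i j = M j i) (c g : Fin n → ℝ) (hc : ∀ i, 0 ≤ c i)
    (hg : ∀ i, 0 ≤ g i) :
    ∑ j, ∑ i, M j i * (c j * g i) ≤
      Nrm t1 c * Nrm t2 g * Nrm q (fun i => ∑ j, M i j) := by
  have hq1 : q < 1 := by linarith
  have h1q : 0 < 1 - q := by linarith
  set α := t1 / (1 - q) with hαdef
  set β := t2 / (1 - q) with hβdef
  have hα : 0 < α := div_pos ht1 h1q
  have hβ : 0 < β := div_pos ht2 h1q
  have hαβ : α + β = 1 := by
    rw [hαdef, hβdef, ← add_div, div_eq_one_iff_eq h1q.ne']; linarith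
  -- step 1 : Hölder over pairs
  have key := holder_w (ι := Fin n × Fin n) (fun p => M p.1 p.2) (fun p => c p.1)
    (fun p => g p.2) (fun p => hM _ _) (fun p => hc _) (fun p => hg _) hα hβ hαβ
  rw [Fintype.sum_prod_type, Fintype.sum_prod_type, Fintype.sum_prod_type] at key
  -- step 2 : bound each factor
  set R : Fin n → ℝ := fun i => ∑ j, M i j with hR
  have hRnn : ∀ i, 0 ≤ R i := fun i => Finset.sum_nonneg fun j _ => hM _ _
  have hq' : q + (1 - q) = 1 := by ring
  have f1 : ∑ j, ∑ i, M j i * c j ^ ((1:ℝ)/α) = ∑ j, R j * c j ^ ((1:ℝ)/α) := by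
    apply Finset.sum_congr rfl; intro j _
    rw [← Finset.sum_mul]
  have f2 : ∑ j, ∑ i, M j i * g i ^ ((1:ℝ)/β) = ∑ i, R i * g i ^ ((1:ℝ)/β) := by
    rw [Finset.sum_comm]
    apply Finset.sum_congr rfl; intro i _
    rw [← Finset.sum_mul]
    congr 1
    exact Finset.sum_congr rfl fun j _ => hMs j i
  have b1 := holder_w (fun _ : Fin n => (1:ℝ)) R (fun j => c j ^ ((1:ℝ)/α))
    (fun _ => zero_le_one) hRnn (fun j => Real.rpow_nonneg (hc j) _) hq h1q hq'
  have b2 := holder_w (fun _ : Fin n => (1:ℝ)) R (fun j => g j ^ ((1:ℝ)/β))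
    (fun _ => zero_le_one) hRnn (fun j => Real.rpow_nonneg (hg j) _) hq h1q hq'
  simp only [one_mul] at b1 b2
  have ec : ∀ j, (c j ^ ((1:ℝ)/α)) ^ ((1:ℝ)/(1-q)) = c j ^ ((1:ℝ)/t1) := by
    intro j; rw [← Real.rpow_mul (hc j)]; congr 1; rw [hαdef]; field_simp
  have eg : ∀ j, (g j ^ ((1:ℝ)/β)) ^ ((1:ℝ)/(1-q)) = g j ^ ((1:ℝ)/t2) := by
    intro j; rw [← Real.rpow_mul (hg j)]; congr 1; rw [hβdef]; field_simp
  rw [Finset.sum_congr rfl fun j _ => ec j] at b1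
  rw [Finset.sum_congr rfl fun j _ => eg j] at b2
  -- assemble
  set SR := ∑ i, R i ^ ((1:ℝ)/q) with hSR
  set Sc := ∑ i, c i ^ ((1:ℝ)/t1) with hSc
  set Sg := ∑ i, g i ^ ((1:ℝ)/t2) with hSg
  have hSRnn : 0 ≤ SR := Finset.sum_nonneg fun i _ => Real.rpow_nonneg (hRnn i) _
  have hScnn : 0 ≤ Sc := Finset.sum_nonneg fun i _ => Real.rpow_nonneg (hc i) _
  have hSgnn : 0 ≤ Sg := Finset.sum_nonneg fun i _ => Real.rpow_nonneg (hg i) _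
  have hF1nn : 0 ≤ ∑ j, ∑ i, M j i * c j ^ ((1:ℝ)/α) :=
    Finset.sum_nonneg fun j _ => Finset.sum_nonneg fun i _ =>
      mul_nonneg (hM _ _) (Real.rpow_nonneg (hc _) _)
  have hF2nn : 0 ≤ ∑ j, ∑ i, M j i * g i ^ ((1:ℝ)/β) :=
    Finset.sum_nonneg fun j _ => Finset.sum_nonneg fun i _ =>
      mul_nonneg (hM _ _) (Real.rpow_nonneg (hg _) _)
  have c1 : (∑ j, ∑ i, M j i * c j ^ ((1:ℝ)/α)) ^ α ≤ (SR ^ q * Sc ^ (1-q)) ^ α := by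
    apply Real.rpow_le_rpow hF1nn _ hα.le
    rw [f1]; exact b1
  have c2 : (∑ j, ∑ i, M j i * g i ^ ((1:ℝ)/β)) ^ β ≤ (SR ^ q * Sg ^ (1-q)) ^ β := by
    apply Real.rpow_le_rpow hF2nn _ hβ.le
    rw [f2]; exact b2
  simp only at key
  refine (key.trans (mul_le_mul c1 c2 (Real.rpow_nonneg hF2nn _)
      (Real.rpow_nonneg (mul_nonneg (Real.rpow_nonneg hSRnn _)
        (Real.rpow_nonneg hScnn _)) _))).trans_eq ?_
  rw [Real.mul_rpow (Real.rpow_nonneg hSRnn _) (Real.rpow_nonneg hScnn _),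
    Real.mul_rpow (Real.rpow_nonneg hSRnn _) (Real.rpow_nonneg hSgnn _),
    ← Real.rpow_mul hSRnn, ← Real.rpow_mul hScnn, ← Real.rpow_mul hSRnn,
    ← Real.rpow_mul hSgnn]
  have e1 : (1-q) * α = t1 := by rw [hαdef]; field_simp
  have e2 : (1-q) * β = t2 := by rw [hβdef]; field_simp
  rw [e1, e2]
  have e3 : SR ^ (q * α) * Sc ^ t1 * (SR ^ (q * β) * Sg ^ t2) =
      (SR ^ (q*α) * SR ^ (q*β)) * (Sc ^ t1 * Sg ^ t2) := by ring
  rw [e3, ← Real.rpow_add' hSRnn (by rw [← mul_add, hαβ, mul_one]; exact hq.ne')]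
  rw [← mul_add, hαβ, mul_one]
  rw [Nrm, if_neg ht1.ne', Nrm, if_neg ht2.ne', Nrm, if_neg hq.ne']
  ring

lemma contraction {n : ℕ} {t q : ℝ} (ht : 0 ≤ t) (hq : 0 < q) (htq : t + q ≤ 1)
    (M : Fin n → Fin n → ℝ) (hM : ∀ i j, 0 ≤ M i j) (hMs : ∀ i j, M i j = M j i)
    (c : Fin n → ℝ) (hc : ∀ i, 0 ≤ c i) (hone : t = 0 → ∀ i, c i = 1) :
    Nrm (t + q) (fun i => ∑ j, c j * M j i) ≤
      Nrm t c * Nrm q (fun i => ∑ j, M i j) := by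
  have hdnn : ∀ i, (0:ℝ) ≤ ∑ j, c j * M j i :=
    fun i => Finset.sum_nonneg fun j _ => mul_nonneg (hc j) (hM j i)
  have hRnn : ∀ i, (0:ℝ) ≤ ∑ j, M i j :=
    fun i => Finset.sum_nonneg fun j _ => hM i j
  have hNrm_one : ∀ f : Fin n → ℝ, Nrm 1 f = ∑ i, f i := by
    intro f; rw [Nrm, if_neg one_ne_zero]
    norm_num
  rcases eq_or_lt_of_le ht with h0 | htp
  · -- t = 0
    have hc1 : ∀ i, c i = 1 := hone h0.symm
    have hde : (fun i => ∑ j, c j * M j i) = fun i => ∑ j, M i j := by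
      funext i
      exact Finset.sum_congr rfl fun j _ => by rw [hc1 j, one_mul, hMs]
    rw [hde, ← h0, zero_add]
    have : Nrm (n := n) 0 c = 1 := by simp [Nrm]
    rw [this, one_mul]
  · rcases eq_or_lt_of_le htq with he | hlt
    · -- t + q = 1
      have hmul := Nrm_mul_le (c1 := c) (c2 := fun i => ∑ j, M i j) ht hq htq hc hRnn hone
      rw [he, hNrm_one] at hmul ⊢
      refine le_trans (le_of_eq ?_) hmul
      calc ∑ i, (∑ j, c j * M j i) = ∑ j, ∑ i, c j * M j i := Finset.sum_comm
      _ = ∑ j, c j * ∑ i, M j i := by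
          exact Finset.sum_congr rfl fun j _ => by rw [← Finset.mul_sum]
    · -- t + q < 1
      set d : Fin n → ℝ := fun i => ∑ j, c j * M j i with hd
      set X := ∑ i, d i ^ ((1:ℝ)/(t+q)) with hX
      have htq0 : (0:ℝ) < t + q := by linarith
      have hXnn : 0 ≤ X := Finset.sum_nonneg fun i _ => Real.rpow_nonneg (hdnn i) _
      have hNd : Nrm (t+q) d = X ^ (t+q) := by rw [Nrm, if_neg htq0.ne']
      have ht2 : 0 < 1 - (t+q) := by linarith
      set g : Fin n → ℝ := fun i => d i ^ ((1:ℝ)/(t+q) - 1) with hg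
      have hgnn : ∀ i, 0 ≤ g i := fun i => Real.rpow_nonneg (hdnn i) _
      have hrpow_split : ∀ x : ℝ, 0 ≤ x →
          x ^ ((1:ℝ)/(t+q)) = x * x ^ ((1:ℝ)/(t+q) - 1) := by
        intro x hx
        rcases eq_or_lt_of_le hx with h | h
        · rw [← h, Real.zero_rpow (by positivity : (1:ℝ)/(t+q) ≠ 0), zero_mul]
        · have e := Real.rpow_add h 1 ((1:ℝ)/(t+q) - 1)
          rw [Real.rpow_one] at e
          conv_lhs => rw [show (1:ℝ)/(t+q) = 1 + ((1:ℝ)/(t+q) - 1) by ring]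
          exact e
      have hXeq : X = ∑ j, ∑ i, M j i * (c j * g i) := by
        calc X = ∑ i, d i * g i := by
              refine Finset.sum_congr rfl fun i _ => ?_
              rw [hrpow_split (d i) (hdnn i)]
        _ = ∑ i, ∑ j, M j i * (c j * g i) := by
              refine Finset.sum_congr rfl fun i _ => ?_
              rw [show d i = ∑ j, c j * M j i from rfl, Finset.sum_mul]
              exact Finset.sum_congr rfl fun j _ => by ring
        _ = ∑ j, ∑ i, M j i * (c j * g i) := Finset.sum_comm
      have key := trilinear htp ht2 hq (by ring) M hM hMs c g hc hgnn
      rw [← hXeq] at key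
      have hNg : Nrm (1-(t+q)) g = X ^ (1 - (t+q)) := by
        rw [Nrm, if_neg ht2.ne']
        congr 1
        refine Finset.sum_congr rfl fun i _ => ?_
        rw [hg]
        simp only
        rw [← Real.rpow_mul (hdnn i)]
        congr 1
        field_simp
      rw [hNg] at key
      -- conclude
      rw [hNd]
      rcases eq_or_lt_of_le hXnn with hx0 | hxp
      · rw [← hx0, Real.zero_rpow htq0.ne']
        exact mul_nonneg (Nrm_nonneg hc) (Nrm_nonneg hRnn)
      · have e1 : X ^ (t+q) = X * X ^ ((t+q) - 1) := by
          conv_lhs => rw [show t+q = 1 + ((t+q) - 1) by ring]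
          rw [Real.rpow_add hxp, Real.rpow_one]
        rw [e1]
        have step := mul_le_mul_of_nonneg_right key (Real.rpow_nonneg hXnn ((t+q)-1))
        refine step.trans (le_of_eq ?_)
        have e2 : X ^ (1 - (t+q)) * X ^ ((t+q) - 1) = 1 := by
          rw [← Real.rpow_add hxp]
          norm_num
        calc Nrm t c * X ^ (1 - (t+q)) * Nrm q (fun i => ∑ j, M i j) * X ^ ((t+q)-1)
            = Nrm t c * Nrm q (fun i => ∑ j, M i j) *
              (X ^ (1 - (t+q)) * X ^ ((t+q)-1)) := by ring
        _ = Nrm t c * Nrm q (fun i => ∑ j, M i j) := by rw [e2, mul_one]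

lemma marginalize {m n : ℕ} (ℓ : Fin m) (H : (Fin m → Fin n) → ℝ)
    (G : (Fin m → Fin n) → Fin n → ℝ)
    (hH : ∀ v j, H (Function.update v ℓ j) = H v)
    (hG : ∀ v j j', G (Function.update v ℓ j) j' = G v j') :
    (n : ℝ) * ∑ v : Fin m → Fin n, H v * G v (v ℓ) =
      ∑ v : Fin m → Fin n, H v * (∑ j, G v j) := by
  classical
  set φ : ((Fin m → Fin n) × Fin n) → ((Fin m → Fin n) × Fin n) :=
    fun p => (Function.update p.1 ℓ p.2, p.1 ℓ) with hφ
  have hinv : Function.Involutive φ := by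
    intro p
    simp only [hφ, Function.update_self, Function.update_idem, Function.update_eq_self]
  have hbij := hinv.bijective
  have key := Fintype.sum_bijective φ hbij
    (fun p => H p.1 * G p.1 (p.1 ℓ))
    (fun p => H p.1 * G p.1 p.2) ?_
  · -- key : ∑ p, H p.1 * G p.1 (p.1 ℓ) = ∑ p, H p.1 * G p.1 p.2
    calc (n : ℝ) * ∑ v : Fin m → Fin n, H v * G v (v ℓ)
        = ∑ p : (Fin m → Fin n) × Fin n, H p.1 * G p.1 (p.1 ℓ) := by
          rw [Fintype.sum_prod_type]
          simp only [Finset.sum_const, Finset.card_univ, Fintype.card_fin, nsmul_eq_mul]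
          rw [Finset.mul_sum]
    _ = ∑ p : (Fin m → Fin n) × Fin n, H p.1 * G p.1 p.2 := key
    _ = ∑ v : Fin m → Fin n, H v * (∑ j, G v j) := by
          rw [Fintype.sum_prod_type]
          exact Finset.sum_congr rfl fun v _ => by rw [Finset.mul_sum]
  · intro p
    simp only [hφ, Function.update_self, hH, hG]

lemma main_claim {m n : ℕ} (r : Fin m) (P : Fin m → Fin m) (Dp : Fin m → ℕ)
    (hPD : ∀ x, x ≠ r → Dp (P x) < Dp x)
    (M : Fin m → Fin n → Fin n → ℝ) (hMnn : ∀ x i j, 0 ≤ M x i j)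
    (hMsym : ∀ x i j, M x i j = M x j i)
    (q : Fin m → ℝ) (hq : ∀ x, x ≠ r → 0 < q x) :
    ∀ (k : ℕ) (S : Finset (Fin m)) (c : Fin m → Fin n → ℝ) (t : Fin m → ℝ),
      S.card = k + 1 → r ∈ S → (∀ x ∈ S, x ≠ r → P x ∈ S) →
      (∀ x i, 0 ≤ c x i) → (∀ x, 0 ≤ t x) → (∀ x, t x = 0 → ∀ i, c x i = 1) →
      ((∑ x ∈ S, t x) + (∑ x ∈ S.erase r, q x) = 1) →
      ∑ v : Fin m → Fin n,
          (∏ x ∈ S, c x (v x)) * (∏ x ∈ S.erase r, M x (v x) (v (P x))) ≤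
        (n:ℝ) ^ (m - S.card) *
          ((∏ x ∈ S, Nrm (t x) (c x)) *
            (∏ x ∈ S.erase r, Nrm (q x) (fun i => ∑ j, M x i j))) := by
  intro k
  induction k with
  | zero =>
    intro S c t hcard hr _ hc ht0 _ hsum
    obtain ⟨a, ha⟩ := Finset.card_eq_one.1 hcard
    subst ha
    rw [Finset.mem_singleton] at hr
    subst hr
    simp only [Finset.erase_singleton, Finset.prod_empty, Finset.sum_empty,
      Finset.prod_singleton, Finset.sum_singleton, mul_one, add_zero] at *
    -- hsum : t r = 1
    rcases Nat.eq_zero_or_pos n with hn | hn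
    · subst hn
      have : IsEmpty (Fin m → Fin 0) := by
        refine ⟨fun f => ?_⟩
        exact (f r).elim0
      rw [Finset.univ_eq_empty, Finset.sum_empty]
      exact mul_nonneg (by positivity) (Nrm_nonneg (hc r))
    · have marg := marginalize (n := n) r (fun _ => (1:ℝ)) (fun _ j => c r j)
        (fun _ _ => rfl) (fun _ _ _ => rfl)
      simp only [one_mul] at marg
      have hNrm : Nrm (t r) (c r) = ∑ i, c r i := by
        rw [hsum, Nrm, if_neg one_ne_zero]
        norm_num
      rw [hNrm]
      have hm1 : 1 ≤ m := by
        rcases Nat.eq_zero_or_pos m with h | h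
        · exact absurd r.2 (by omega)
        · exact h
      have hcancel : (n:ℝ) * ∑ v : Fin m → Fin n, c r (v r) =
          (n:ℝ) * ((n:ℝ) ^ (m - 1) * ∑ i, c r i) := by
        rw [marg]
        rw [Finset.sum_const, Finset.card_univ]
        have : Fintype.card (Fin m → Fin n) = n ^ m := by
          simp [Fintype.card_fun]
        rw [this, nsmul_eq_mul]
        push_cast
        rw [← mul_assoc, ← pow_succ']
        congr 2
        omega
      have hnR : (0:ℝ) < n := by exact_mod_cast hn
      have := mul_left_cancel₀ hnR.ne' hcancel
      rw [this, Finset.card_singleton]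
  | succ k IH =>
    intro S c t hcard hr hclosed hc ht0 hone hsum
    classical
    rcases Nat.eq_zero_or_pos n with hn | hn
    · subst hn
      have : IsEmpty (Fin m → Fin 0) := ⟨fun f => (f r).elim0⟩
      rw [Finset.univ_eq_empty, Finset.sum_empty]
      refine mul_nonneg (by positivity) (mul_nonneg ?_ ?_)
      · exact Finset.prod_nonneg fun x _ => Nrm_nonneg (hc x)
      · exact Finset.prod_nonneg fun x _ => Nrm_nonneg
          (fun i => Finset.sum_nonneg fun j _ => hMnn x i j)
    have hne : (S.erase r).Nonempty := by
      rw [← Finset.card_pos, Finset.card_erase_of_mem hr, hcard]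
      omega
    obtain ⟨ℓ, hℓmem, hℓmax⟩ := Finset.exists_max_image (S.erase r) Dp hne
    have hℓr : ℓ ≠ r := (Finset.mem_erase.1 hℓmem).1
    have hℓS : ℓ ∈ S := (Finset.mem_erase.1 hℓmem).2
    set u := P ℓ with hu
    have hDu : Dp u < Dp ℓ := hPD ℓ hℓr
    have huℓ : u ≠ ℓ := fun h => absurd (h ▸ hDu) (lt_irrefl _)
    have huS : u ∈ S := hclosed ℓ hℓS hℓr
    set S' := S.erase ℓ with hS'
    have hrS' : r ∈ S' := Finset.mem_erase.2 ⟨Ne.symm hℓr, hr⟩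
    have huS' : u ∈ S' := Finset.mem_erase.2 ⟨huℓ, huS⟩
    have hPneℓ : ∀ x ∈ S, x ≠ r → P x ≠ ℓ := by
      intro x hx hxr hPx
      have h1 : Dp ℓ < Dp x := hPx ▸ hPD x hxr
      have h2 : Dp x ≤ Dp ℓ := hℓmax x (Finset.mem_erase.2 ⟨hxr, hx⟩)
      omega
    have hclosed' : ∀ x ∈ S', x ≠ r → P x ∈ S' := by
      intro x hx hxr
      have hxS : x ∈ S := (Finset.mem_erase.1 hx).2
      exact Finset.mem_erase.2 ⟨hPneℓ x hxS hxr, hclosed x hxS hxr⟩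
    set d : Fin n → ℝ := fun i => ∑ j, c ℓ j * M ℓ j i with hd
    have hdnn : ∀ i, 0 ≤ d i :=
      fun i => Finset.sum_nonneg fun j _ => mul_nonneg (hc ℓ j) (hMnn ℓ j i)
    set c' := Function.update c u (fun i => c u i * d i) with hc'def
    set t' := Function.update t u (t u + (t ℓ + q ℓ)) with ht'def
    set F : (Fin m → Fin n) → ℝ := fun v =>
      (∏ x ∈ S', c x (v x)) * (∏ x ∈ S'.erase r, M x (v x) (v (P x))) with hF
    set G : (Fin m → Fin n) → Fin n → ℝ := fun v j => c ℓ j * M ℓ j (v u) with hG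
    have hsplit : ∀ v : Fin m → Fin n,
        (∏ x ∈ S, c x (v x)) * (∏ x ∈ S.erase r, M x (v x) (v (P x))) =
          F v * G v (v ℓ) := by
      intro v
      rw [hF, hG]
      simp only
      have e1 : ∏ x ∈ S, c x (v x) = c ℓ (v ℓ) * ∏ x ∈ S', c x (v x) :=
        (Finset.mul_prod_erase S _ hℓS).symm
      have e2 : ∏ x ∈ S.erase r, M x (v x) (v (P x)) =
          M ℓ (v ℓ) (v u) * ∏ x ∈ (S.erase r).erase ℓ, M x (v x) (v (P x)) :=
        (Finset.mul_prod_erase _ _ hℓmem).symm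
      rw [e1, e2, Finset.erase_right_comm]
      ring
    have hHind : ∀ v j, F (Function.update v ℓ j) = F v := by
      intro v j
      rw [hF]
      simp only
      congr 1
      · refine Finset.prod_congr rfl fun x hx => ?_
        rw [Function.update_of_ne (Finset.mem_erase.1 hx).1]
      · refine Finset.prod_congr rfl fun x hx => ?_
        have hx1 : x ≠ r := (Finset.mem_erase.1 hx).1
        have hxS' : x ∈ S' := (Finset.mem_erase.1 hx).2
        have hxℓ : x ≠ ℓ := (Finset.mem_erase.1 hxS').1
        have hxS : x ∈ S := (Finset.mem_erase.1 hxS').2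
        rw [Function.update_of_ne hxℓ, Function.update_of_ne (hPneℓ x hxS hx1)]
    have hGind : ∀ v j j', G (Function.update v ℓ j) j' = G v j' := by
      intro v j j'
      rw [hG]
      simp only
      rw [Function.update_of_ne huℓ]
    have marg := marginalize ℓ F G hHind hGind
    have hGsum : ∀ v : Fin m → Fin n, (∑ j, G v j) = d (v u) := by
      intro v; rw [hG, hd]
    have hassemble : ∀ v : Fin m → Fin n, F v * d (v u) =
        (∏ x ∈ S', c' x (v x)) * (∏ x ∈ S'.erase r, M x (v x) (v (P x))) := by
      intro v
      rw [hF]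
      simp only
      have ecc : ∏ x ∈ S', c' x (v x) = (∏ x ∈ S', c x (v x)) * d (v u) := by
        have e1 : ∏ x ∈ S', c' x (v x) =
            (c u (v u) * d (v u)) * ∏ x ∈ S'.erase u, c x (v x) := by
          rw [← Finset.mul_prod_erase S' _ huS']
          congr 1
          · rw [hc'def, Function.update_self]
          · refine Finset.prod_congr rfl fun x hx => ?_
            rw [hc'def, Function.update_of_ne (Finset.mem_erase.1 hx).1]
        have e2 : ∏ x ∈ S', c x (v x) =
            c u (v u) * ∏ x ∈ S'.erase u, c x (v x) :=
          (Finset.mul_prod_erase S' _ huS').symm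
        rw [e1, e2]
        ring
      rw [ecc]
      ring
    have step1 : (n:ℝ) * (∑ v : Fin m → Fin n,
          (∏ x ∈ S, c x (v x)) * (∏ x ∈ S.erase r, M x (v x) (v (P x))))
        = ∑ v : Fin m → Fin n,
            (∏ x ∈ S', c' x (v x)) * (∏ x ∈ S'.erase r, M x (v x) (v (P x))) := by
      rw [Finset.mul_sum]
      rw [Finset.sum_congr rfl fun v _ => by rw [hsplit v]]
      rw [← Finset.mul_sum, marg]
      exact Finset.sum_congr rfl fun v _ => by rw [hGsum v, hassemble v]
    -- invariants for S'
    have hcard' : S'.card = k + 1 := by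
      rw [hS', Finset.card_erase_of_mem hℓS, hcard]
      omega
    have hqℓ : 0 < q ℓ := hq ℓ hℓr
    have hc'nn : ∀ x i, 0 ≤ c' x i := by
      intro x i
      rcases eq_or_ne x u with rfl | hxu
      · rw [hc'def, Function.update_self]; exact mul_nonneg (hc u i) (hdnn i)
      · rw [hc'def, Function.update_of_ne hxu]; exact hc x i
    have ht'0 : ∀ x, 0 ≤ t' x := by
      intro x
      rcases eq_or_ne x u with rfl | hxu
      · rw [ht'def, Function.update_self]
        have h1 := ht0 u; have h2 := ht0 ℓ; linarith
      · rw [ht'def, Function.update_of_ne hxu]; exact ht0 x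
    have hone' : ∀ x, t' x = 0 → ∀ i, c' x i = 1 := by
      intro x hx i
      rcases eq_or_ne x u with rfl | hxu
      · rw [ht'def, Function.update_self] at hx
        exfalso
        have h1 := ht0 u; have h2 := ht0 ℓ; linarith
      · rw [ht'def, Function.update_of_ne hxu] at hx
        rw [hc'def, Function.update_of_ne hxu]
        exact hone x hx i
    have hsumS't : ∑ x ∈ S', t x + t ℓ = ∑ x ∈ S, t x :=
      Finset.sum_erase_add S t hℓS
    have hsumq : ∑ x ∈ S'.erase r, q x + q ℓ = ∑ x ∈ S.erase r, q x := by
      rw [hS', Finset.erase_right_comm]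
      exact Finset.sum_erase_add _ _ hℓmem
    have hsumt' : ∑ x ∈ S', t' x = ∑ x ∈ S', t x + (t ℓ + q ℓ) := by
      rw [← Finset.sum_erase_add S' t' huS', ← Finset.sum_erase_add S' t huS']
      have he : ∑ x ∈ S'.erase u, t' x = ∑ x ∈ S'.erase u, t x :=
        Finset.sum_congr rfl fun x hx => by
          rw [ht'def, Function.update_of_ne (Finset.mem_erase.1 hx).1]
      rw [he, ht'def, Function.update_self]
      ring
    have hsum' : (∑ x ∈ S', t' x) + (∑ x ∈ S'.erase r, q x) = 1 := by
      rw [hsumt']; linarith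
    -- exponent bounds
    have ht'u_le : t' u ≤ 1 := by
      have h1 : t' u ≤ ∑ x ∈ S', t' x :=
        Finset.single_le_sum (fun x _ => ht'0 x) huS'
      have h2 : 0 ≤ ∑ x ∈ S'.erase r, q x :=
        Finset.sum_nonneg fun x hx => (hq x (Finset.mem_erase.1 hx).1).le
      linarith
    have hb2 : t u + (t ℓ + q ℓ) ≤ 1 := by
      rw [ht'def, Function.update_self] at ht'u_le; exact ht'u_le
    have hb1 : t ℓ + q ℓ ≤ 1 := by have := ht0 u; linarith
    -- norm estimates
    have step2 : Nrm (t ℓ + q ℓ) d ≤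
        Nrm (t ℓ) (c ℓ) * Nrm (q ℓ) (fun i => ∑ j, M ℓ i j) := by
      rw [hd]
      exact contraction (ht0 ℓ) hqℓ hb1 (M ℓ) (hMnn ℓ) (hMsym ℓ) (c ℓ) (hc ℓ) (hone ℓ)
    have step1N : Nrm (t' u) (c' u) ≤ Nrm (t u) (c u) * Nrm (t ℓ + q ℓ) d := by
      have h1 : c' u = fun i => c u i * d i := by
        rw [hc'def]; exact Function.update_self _ _ _
      have h2 : t' u = t u + (t ℓ + q ℓ) := by
        rw [ht'def]; exact Function.update_self _ _ _
      rw [h1, h2]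
      exact Nrm_mul_le (ht0 u) (by have := ht0 ℓ; linarith) hb2 (hc u) hdnn
        (fun h => hone u h)
    have hNu : Nrm (t' u) (c' u) ≤
        Nrm (t u) (c u) * (Nrm (t ℓ) (c ℓ) * Nrm (q ℓ) (fun i => ∑ j, M ℓ i j)) :=
      step1N.trans (mul_le_mul_of_nonneg_left step2 (Nrm_nonneg (hc u)))
    have hA : (0:ℝ) ≤ ∏ x ∈ S'.erase u, Nrm (t x) (c x) :=
      Finset.prod_nonneg fun x _ => Nrm_nonneg (hc x)
    have hB : (0:ℝ) ≤ ∏ x ∈ S'.erase r, Nrm (q x) (fun i => ∑ j, M x i j) :=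
      Finset.prod_nonneg fun x _ => Nrm_nonneg fun i =>
        Finset.sum_nonneg fun j _ => hMnn x i j
    have hNprod : (∏ x ∈ S', Nrm (t' x) (c' x)) *
          (∏ x ∈ S'.erase r, Nrm (q x) (fun i => ∑ j, M x i j))
        ≤ (∏ x ∈ S, Nrm (t x) (c x)) *
          (∏ x ∈ S.erase r, Nrm (q x) (fun i => ∑ j, M x i j)) := by
      have e1 : ∏ x ∈ S', Nrm (t' x) (c' x) =
          Nrm (t' u) (c' u) * ∏ x ∈ S'.erase u, Nrm (t x) (c x) := by
        rw [← Finset.mul_prod_erase S' _ huS']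
        congr 1
        refine Finset.prod_congr rfl fun x hx => ?_
        rw [ht'def, hc'def, Function.update_of_ne (Finset.mem_erase.1 hx).1,
          Function.update_of_ne (Finset.mem_erase.1 hx).1]
      have e2 : ∏ x ∈ S, Nrm (t x) (c x) =
          Nrm (t ℓ) (c ℓ) * (Nrm (t u) (c u) * ∏ x ∈ S'.erase u, Nrm (t x) (c x)) := by
        rw [← Finset.mul_prod_erase S _ hℓS, ← Finset.mul_prod_erase S' _ huS']
      have e3 : ∏ x ∈ S.erase r, Nrm (q x) (fun i => ∑ j, M x i j) =
          Nrm (q ℓ) (fun i => ∑ j, M ℓ i j) *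
            ∏ x ∈ S'.erase r, Nrm (q x) (fun i => ∑ j, M x i j) := by
        rw [← Finset.mul_prod_erase _ _ hℓmem, hS', Finset.erase_right_comm]
      rw [e1, e2, e3]
      calc (Nrm (t' u) (c' u) * ∏ x ∈ S'.erase u, Nrm (t x) (c x)) *
            ∏ x ∈ S'.erase r, Nrm (q x) (fun i => ∑ j, M x i j)
          ≤ ((Nrm (t u) (c u) *
              (Nrm (t ℓ) (c ℓ) * Nrm (q ℓ) (fun i => ∑ j, M ℓ i j))) *
              ∏ x ∈ S'.erase u, Nrm (t x) (c x)) *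
            ∏ x ∈ S'.erase r, Nrm (q x) (fun i => ∑ j, M x i j) :=
            mul_le_mul_of_nonneg_right (mul_le_mul_of_nonneg_right hNu hA) hB
      _ = (Nrm (t ℓ) (c ℓ) * (Nrm (t u) (c u) * ∏ x ∈ S'.erase u, Nrm (t x) (c x))) *
            (Nrm (q ℓ) (fun i => ∑ j, M ℓ i j) *
              ∏ x ∈ S'.erase r, Nrm (q x) (fun i => ∑ j, M x i j)) := by ring
    -- conclude
    have IHres := IH S' c' t' hcard' hrS' hclosed' hc'nn ht'0 hone' hsum'
    rw [hcard'] at IHres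
    have hnR : (0:ℝ) < n := by exact_mod_cast hn
    have hkm : k + 2 ≤ m := by
      have := Finset.card_le_univ S
      rw [hcard] at this
      simp at this; omega
    have hpow : ((n:ℝ)) ^ (m - (k+1)) = (n:ℝ) * (n:ℝ) ^ (m - S.card) := by
      rw [hcard]
      rw [show m - (k+1) = (m - (k+2)) + 1 by omega, pow_succ']
    have final : (n:ℝ) * (∑ v : Fin m → Fin n,
          (∏ x ∈ S, c x (v x)) * (∏ x ∈ S.erase r, M x (v x) (v (P x))))
        ≤ (n:ℝ) * ((n:ℝ) ^ (m - S.card) *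
            ((∏ x ∈ S, Nrm (t x) (c x)) *
              (∏ x ∈ S.erase r, Nrm (q x) (fun i => ∑ j, M x i j)))) := by
      rw [step1]
      refine IHres.trans ?_
      have hmono := mul_le_mul_of_nonneg_left hNprod
        (by positivity : (0:ℝ) ≤ ((n:ℝ)) ^ (m - (k+1)))
      refine hmono.trans (le_of_eq ?_)
      rw [hpow, mul_assoc]
    exact le_of_mul_le_mul_left final hnR

lemma tree_struct {V : Type*} {G : SimpleGraph V} (hG : G.IsTree) (r : V) :
    ∃ (P : V → V) (Dp : V → ℕ),
      (∀ x, x ≠ r → G.Adj x (P x) ∧ Dp (P x) < Dp x) ∧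
      (∀ a b, G.Adj a b → (a ≠ r ∧ P a = b) ∨ (b ≠ r ∧ P b = a)) := by
  classical
  have hEU := hG.existsUnique_path
  have hex : ∀ x y : V, ∃ p : G.Walk x y, p.IsPath := fun x y => (hEU x y).exists
  choose pth hpth using hex
  have huniq : ∀ (x y : V) (q : G.Walk x y), q.IsPath → q = pth x y := fun x y q hq =>
    (hEU x y).unique hq (hpth x y)
  refine ⟨fun x => (pth x r).getVert 1, fun x => (pth x r).length, ?_, ?_⟩
  · intro x hx
    obtain ⟨y, hadj, q, hq⟩ := SimpleGraph.Walk.exists_eq_cons_of_ne hx (pth x r)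
    have hqpath : q.IsPath ∧ x ∉ q.support := by
      have h := hpth x r
      rw [hq, SimpleGraph.Walk.cons_isPath_iff] at h
      exact h
    have hqy : q = pth y r := huniq y r q hqpath.1
    constructor
    · show G.Adj x ((pth x r).getVert 1)
      rw [hq, SimpleGraph.Walk.getVert_cons_succ, SimpleGraph.Walk.getVert_zero]
      exact hadj
    · show (pth ((pth x r).getVert 1) r).length < (pth x r).length
      rw [hq, SimpleGraph.Walk.getVert_cons_succ, SimpleGraph.Walk.getVert_zero, ← hqy,
        SimpleGraph.Walk.length_cons]
      omega
  · intro a b hab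
    by_cases hmem : a ∈ (pth b r).support
    · right
      have hbr : b ≠ r := by
        rintro rfl
        have hnil : (SimpleGraph.Walk.nil : G.Walk b b) = pth b b :=
          huniq b b _ SimpleGraph.Walk.IsPath.nil
        rw [← hnil, SimpleGraph.Walk.support_nil] at hmem
        simp at hmem
        exact hab.ne hmem
      refine ⟨hbr, ?_⟩
      have hsplit := (pth b r).take_spec hmem
      have htake : ((pth b r).takeUntil a hmem).IsPath :=
        (hpth b r).takeUntil hmem
      have hdrop : ((pth b r).dropUntil a hmem).IsPath :=
        (hpth b r).dropUntil hmem
      have hdrop_eq : (pth b r).dropUntil a hmem = pth a r := huniq a r _ hdrop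
      have hsingle : (pth b r).takeUntil a hmem =
          SimpleGraph.Walk.cons hab.symm SimpleGraph.Walk.nil := by
        have hps : (SimpleGraph.Walk.cons hab.symm
            (SimpleGraph.Walk.nil : G.Walk a a)).IsPath := by
          rw [SimpleGraph.Walk.cons_isPath_iff]
          refine ⟨SimpleGraph.Walk.IsPath.nil, ?_⟩
          simp [hab.ne']
        rw [huniq b a _ htake, huniq b a _ hps]
      have hfinal : pth b r = SimpleGraph.Walk.cons hab.symm (pth a r) := by
        rw [← hsplit, hsingle, hdrop_eq]
        simp [SimpleGraph.Walk.cons_append]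
      show (pth b r).getVert 1 = a
      rw [hfinal, SimpleGraph.Walk.getVert_cons_succ, SimpleGraph.Walk.getVert_zero]
    · left
      have har : a ≠ r := by
        rintro rfl
        exact hmem (SimpleGraph.Walk.end_mem_support _)
      refine ⟨har, ?_⟩
      have hpath : (SimpleGraph.Walk.cons hab (pth b r)).IsPath := by
        rw [SimpleGraph.Walk.cons_isPath_iff]
        exact ⟨hpth b r, hmem⟩
      show (pth a r).getVert 1 = b
      rw [← huniq a r _ hpath, SimpleGraph.Walk.getVert_cons_succ, SimpleGraph.Walk.getVert_zero]

end BLtree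

open BLtree

/-- Brascamp–Lieb type inequality for trees: if `G` is a tree on `[m]`, each edge `e`
carries a nonnegative symmetric matrix `B e` and reals `p_e ≥ 1` with `∑_e 1/p_e = 1`, then
`∑_{v ∈ [n]^m} ∏_e B^{(e)}_{v(e)} ≤ ∏_e (∑_i (∑_j B^{(e)}_{ij})^{p_e})^{1/p_e}`. -/
theorem stmt3 {m n : ℕ} (hm : 2 ≤ m) (G : SimpleGraph (Fin m)) [DecidableRel G.Adj]
    (hG : G.IsTree)
    (B : Sym2 (Fin m) → Matrix (Fin n) (Fin n) ℝ)
    (hBnn : ∀ e i j, 0 ≤ B e i j) (hBsym : ∀ e i j, B e i j = B e j i)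
    (p : Sym2 (Fin m) → ℝ) (hp : ∀ e ∈ G.edgeFinset, 1 ≤ p e)
    (hpsum : ∑ e ∈ G.edgeFinset, 1 / p e = 1) :
    ∑ v : Fin m → Fin n, ∏ e ∈ G.edgeFinset, edgeVal B hBsym v e ≤
      ∏ e ∈ G.edgeFinset, (∑ i, (∑ j, B e i j) ^ (p e)) ^ (1 / p e) := by
  classical
  obtain ⟨P, Dp, hPD, hdich⟩ := tree_struct hG (⟨0, by omega⟩ : Fin m)
  set r : Fin m := ⟨0, by omega⟩ with hrdef
  have hadjP : ∀ x, x ≠ r → G.Adj x (P x) := fun x hx => (hPD x hx).1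
  have hDlt : ∀ x, x ≠ r → Dp (P x) < Dp x := fun x hx => (hPD x hx).2
  have hinj : ∀ x ∈ Finset.univ.erase r, ∀ y ∈ Finset.univ.erase r,
      s(x, P x) = s(y, P y) → x = y := by
    intro x hx y hy hxy
    rw [Sym2.eq_iff] at hxy
    rcases hxy with ⟨h1, _⟩ | ⟨h1, h2⟩
    · exact h1
    · exfalso
      have hxr : x ≠ r := (Finset.mem_erase.1 hx).1
      have hyr : y ≠ r := (Finset.mem_erase.1 hy).1
      have d1 := hDlt x hxr
      have d2 := hDlt y hyr
      rw [h2] at d1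
      rw [← h1] at d2
      omega
  have himg : G.edgeFinset = (Finset.univ.erase r).image (fun x => s(x, P x)) := by
    ext e
    constructor
    · intro he
      rw [SimpleGraph.mem_edgeFinset] at he
      induction e with
      | _ a b =>
        have hab : G.Adj a b := he
        rcases hdich a b hab with ⟨har, hPa⟩ | ⟨hbr, hPb⟩
        · refine Finset.mem_image.2 ⟨a, Finset.mem_erase.2 ⟨har, Finset.mem_univ a⟩, ?_⟩
          rw [hPa]
        · refine Finset.mem_image.2 ⟨b, Finset.mem_erase.2 ⟨hbr, Finset.mem_univ b⟩, ?_⟩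
          rw [hPb, Sym2.eq_swap]
    · intro he
      obtain ⟨x, hx, rfl⟩ := Finset.mem_image.1 he
      rw [SimpleGraph.mem_edgeFinset]
      exact hadjP x (Finset.mem_erase.1 hx).1
  set M : Fin m → Fin n → Fin n → ℝ := fun x i j => B s(x, P x) i j with hM
  set q' : Fin m → ℝ := fun x => 1 / p s(x, P x) with hq'
  have hq'pos : ∀ x, x ≠ r → 0 < q' x := by
    intro x hx
    have hmem : s(x, P x) ∈ G.edgeFinset := SimpleGraph.mem_edgeFinset.2 (hadjP x hx)
    have := hp _ hmem
    rw [hq']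
    simp only
    positivity
  have hMnn : ∀ x i j, 0 ≤ M x i j := fun x i j => hBnn _ i j
  have hMsym : ∀ x i j, M x i j = M x j i := fun x i j => hBsym _ i j
  have hcardu : (Finset.univ : Finset (Fin m)).card = (m - 1) + 1 := by
    rw [Finset.card_univ, Fintype.card_fin]
    omega
  have hqsum : ∑ x ∈ Finset.univ.erase r, q' x = 1 := by
    rw [← hpsum, himg, Finset.sum_image hinj]
  have key := main_claim r P Dp hDlt M hMnn hMsym q' hq'pos (m - 1) Finset.univ
    (fun _ _ => 1) (fun _ => 0) hcardu (Finset.mem_univ r)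
    (fun x _ _ => Finset.mem_univ (P x)) (fun _ _ => zero_le_one) (fun _ => le_refl 0)
    (fun _ _ _ => rfl) (by rw [hqsum]; simp)
  have hlhs : ∀ v : Fin m → Fin n,
      ∏ e ∈ G.edgeFinset, edgeVal B hBsym v e =
      (∏ x ∈ (Finset.univ : Finset (Fin m)), (1:ℝ)) *
        (∏ x ∈ Finset.univ.erase r, M x (v x) (v (P x))) := by
    intro v
    rw [Finset.prod_const_one, one_mul, himg, Finset.prod_image hinj]
    refine Finset.prod_congr rfl fun x _ => ?_
    simp [edgeVal, Sym2.lift_mk, hM]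
  have hrhs : ∏ e ∈ G.edgeFinset, (∑ i, (∑ j, B e i j) ^ (p e)) ^ (1 / p e) =
      ∏ x ∈ Finset.univ.erase r, Nrm (q' x) (fun i => ∑ j, M x i j) := by
    rw [himg, Finset.prod_image hinj]
    refine Finset.prod_congr rfl fun x hx => ?_
    have hpos := hq'pos x (Finset.mem_erase.1 hx).1
    rw [Nrm, if_neg hpos.ne']
    rw [hq']
    simp only [one_div_one_div]
    rfl
  calc ∑ v : Fin m → Fin n, ∏ e ∈ G.edgeFinset, edgeVal B hBsym v e
      = ∑ v : Fin m → Fin n, (∏ x ∈ (Finset.univ : Finset (Fin m)), (1:ℝ)) *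
          (∏ x ∈ Finset.univ.erase r, M x (v x) (v (P x))) :=
        Finset.sum_congr rfl fun v _ => hlhs v
  _ ≤ (n:ℝ) ^ (m - (Finset.univ : Finset (Fin m)).card) *
        ((∏ x ∈ (Finset.univ : Finset (Fin m)), Nrm ((fun _ => (0:ℝ)) x) ((fun _ _ => (1:ℝ)) x)) *
          (∏ x ∈ Finset.univ.erase r, Nrm (q' x) (fun i => ∑ j, M x i j))) := key
  _ = ∏ e ∈ G.edgeFinset, (∑ i, (∑ j, B e i j) ^ (p e)) ^ (1 / p e) := by
      rw [hrhs]
      rw [Finset.card_univ, Fintype.card_fin, Nat.sub_self, pow_zero, one_mul]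
      have : ∀ x : Fin m, Nrm (n := n) (0:ℝ) (fun _ => (1:ℝ)) = 1 := by
        intro x; simp [Nrm]
      rw [Finset.prod_congr rfl fun x _ => this x, Finset.prod_const_one, one_mul]
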